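/- Let X be an abelian group, let α, β : X → ℂ be unitary characters, let P : X → ℝ be quadratic, let r : X → ℝ be constant on cosets of 2X, and let a, b : X → ℝ take only the values ±1, be constant on cosets of 2X, and satisfy a(x)·b(x) = 1 for all x ∈ X. Then the functions f(x) = α(x)·a(x)·exp(P(x) + r(x)) and g(x) = β(x)·b(x)·exp(P(x) − r(x)) satisfy the Kac–Bernstein functional equation f(x+y)·g(x−y) = f(x)·f(y)·g(x)·g(−y) for all x, y ∈ X. -/

import Mathlib

theorem kac_bernstein_hermitian_converse {X : Type*} [AddCommGroup X]
    (α β : X → ℂ)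
    (hα : ∀ x y : X, α (x + y) = α x * α y) (hα1 : ∀ x : X, ‖α x‖ = 1)
    (hβ : ∀ x y : X, β (x + y) = β x * β y) (hβ1 : ∀ x : X, ‖β x‖ = 1)
    (P : X → ℝ) (hP : ∀ x y : X, P (x + y) + P (x - y) = 2 * (P x + P y))
    (r : X → ℝ) (hr : ∀ x y : X, r (x + 2 • y) = r x)
    (a b : X → ℝ)
    (ha : ∀ x : X, a x = 1 ∨ a x = -1) (hb : ∀ x : X, b x = 1 ∨ b x = -1)
    (ha2 : ∀ x y : X, a (x + 2 • y) = a x) (hb2 : ∀ x y : X, b (x + 2 • y) = b x)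
    (hab : ∀ x : X, a x * b x = 1)
    (f g : X → ℂ)
    (hf : ∀ x : X, f x = α x * (a x : ℂ) * Complex.exp ((P x + r x : ℝ) : ℂ))
    (hg : ∀ x : X, g x = β x * (b x : ℂ) * Complex.exp ((P x - r x : ℝ) : ℂ)) :
    ∀ x y : X, f (x + y) * g (x - y) = f x * f y * g x * g (-y) := by
  intro x y
  have hP0 : P 0 = 0 := by have := hP 0 0; simp at this; linarith
  have hPneg : P (-y) = P y := by have := hP 0 y; simp [hP0] at this; linarith
  have key : ∀ (s : X → ℝ) (hs : ∀ x y : X, s (x + 2 • y) = s x) (z : X), s (-z) = s z := by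
    intro s hs z
    have h1 : z + 2 • (-z) = -z := by simp [two_smul]
    have := hs z (-z); rw [h1] at this; exact this
  have hrneg : r (-y) = r y := key r hr y
  have hbneg : b (-y) = b y := key b hb2 y
  have hxy : x - y + 2 • y = x + y := by simp [two_smul]
  have haxy : a (x + y) = a (x - y) := by rw [← hxy, ha2]
  have hrxy : r (x + y) = r (x - y) := by rw [← hxy, hr]
  -- characters
  have hβx : β (x - y) = β x * β (-y) := by rw [← hβ]; congr 1; abel
  -- sign on LHS
  have hsL : a (x + y) * b (x - y) = 1 := by rw [haxy]; exact hab _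
  have hsR : a x * a y * b x * b (-y) = a (x + y) * b (x - y) := by
    rw [hsL, hbneg]
    have h1 := hab x; have h2 := hab y; nlinarith
  rw [hf, hf, hf, hg, hg, hg, hα x y, hβx]
  rw [show (α x * α y * ((a (x+y) : ℝ) : ℂ) * Complex.exp ((P (x+y) + r (x+y) : ℝ) : ℂ) *
      (β x * β (-y) * ((b (x-y) : ℝ) : ℂ) * Complex.exp ((P (x-y) - r (x-y) : ℝ) : ℂ))) =
      (α x * α y * β x * β (-y)) * (((a (x+y) * b (x-y) : ℝ) : ℂ)) *
      (Complex.exp ((P (x+y) + r (x+y) : ℝ) : ℂ) * Complex.exp ((P (x-y) - r (x-y) : ℝ) : ℂ)) by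
        push_cast; ring]
  rw [show (α x * ((a x : ℝ) : ℂ) * Complex.exp ((P x + r x : ℝ) : ℂ) *
      (α y * ((a y : ℝ) : ℂ) * Complex.exp ((P y + r y : ℝ) : ℂ)) *
      (β x * ((b x : ℝ) : ℂ) * Complex.exp ((P x - r x : ℝ) : ℂ)) *
      (β (-y) * ((b (-y) : ℝ) : ℂ) * Complex.exp ((P (-y) - r (-y) : ℝ) : ℂ))) =
      (α x * α y * β x * β (-y)) * (((a x * a y * b x * b (-y) : ℝ) : ℂ)) *
      (Complex.exp ((P x + r x : ℝ) : ℂ) * Complex.exp ((P y + r y : ℝ) : ℂ) *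
       Complex.exp ((P x - r x : ℝ) : ℂ) * Complex.exp ((P (-y) - r (-y) : ℝ) : ℂ)) by
        push_cast; ring]
  rw [hsR]
  congr 1
  rw [← Complex.exp_add, ← Complex.exp_add, ← Complex.exp_add, ← Complex.exp_add]
  congr 1
  norm_cast
  have hPsum := hP x y
  rw [hrxy, hPneg, hrneg]
  linarith
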